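/- For any natural number m and formal power series φ(x) = e^{⊙x} M_φ with zero constant term, M_{φ^{∘m}} = (e^{⊙M_φ})^m E_1, where E_1 is the block matrix which is the identity in the (1,1) block and zero elsewhere, and the power on the right is with respect to ordinary matrix multiplication. -/

import Mathlib

/-! Multi-index matrices and their symmetric product (Bekbaev). -/

/-- Multi-indices: `n`-tuples of nonnegative integers. -/
abbrev MultiIndex (n : ℕ) := Fin n →₀ ℕ

namespace SymProd

variable {n : ℕ} {R : Type*} [CommRing R]

/-- `|α| = α₁ + ⋯ + αₙ`. -/
def deg (α : MultiIndex n) : ℕ := α.sum fun _ v => v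

/-- `α! = α₁! ⋯ αₙ!`. -/
def mfact (α : MultiIndex n) : ℕ := α.prod fun _ v => v.factorial

/-- The multinomial coefficient `C(α,β) = α!/(β!(α−β)!) = ∏ᵢ C(αᵢ,βᵢ)`. -/
def mchoose (α β : MultiIndex n) : ℕ := ∏ i ∈ α.support ∪ β.support, (α i).choose (β i)

/-- A "matrix" indexed by pairs of multi-indices (row index first). A matrix in
`M(p',p;R)` is such a function supported on rows of degree `p'` and columns of degree `p`. -/
abbrev Mat (n : ℕ) (R : Type*) := MultiIndex n → MultiIndex n → R

/-- `A` belongs to `M(p',p;R)`: supported on rows `α'` with `|α'| = p'` and columns `α`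
with `|α| = p`. -/
def IsHom (p' p : ℕ) (A : Mat n R) : Prop :=
  ∀ α' α, A α' α ≠ 0 → deg α' = p' ∧ deg α = p

/-- The symmetric product
`(A ⊙ B)^{α'}_α = ∑_{β' ≪ α', β ≪ α} C(α,β) A^{β'}_β B^{α'−β'}_{α−β}`.
For `A ∈ M(p',p;R)` and `B ∈ M(q',q;R)` this agrees with Bekbaev's Definition 1
(the degree restrictions on `β, β'` hold automatically on the support of `A`). -/
noncomputable def odot (A B : Mat n R) : Mat n R := fun α' α =>
  ∑ β' ∈ Finset.Iic α', ∑ β ∈ Finset.Iic α,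
    (mchoose α β : R) * A β' β * B (α' - β') (α - β)

/-- The identity element `1 ∈ Mat(R)`: the `(0,0)` block is `1`. -/
def matOne : Mat n R := fun α' α => if α' = 0 ∧ α = 0 then 1 else 0

/-- `A^{⊙m}`, the `m`-th symmetric power. -/
noncomputable def sympow (A : Mat n R) : ℕ → Mat n R
  | 0 => matOne
  | m + 1 => odot (sympow A m) A

/-- The row vector `h = (h₁,…,hₙ) ∈ M(0,1;R)` attached to `h : Fin n → R`. -/
noncomputable def rowVec (h : Fin n → R) : Mat n R := fun α' α =>
  if α' = 0 then ∑ j : Fin n, (if α = Finsupp.single j 1 then h j else 0) else 0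

/-- Multi-indices of degree `w` (a finite set). -/
noncomputable def degSet (n w : ℕ) : Finset (MultiIndex n) :=
  (Finset.Iic (Finsupp.equivFunOnFinite.symm fun _ : Fin n => w)).filter fun β => deg β = w

/-- Ordinary matrix product of `v ∈ M(0,w;R)` with `A ∈ M(p',w;R)`, contracting the
weight-`w` index (the columns of `A`, via transposition): the result, in `M(0,p';R)`,
has entries `(v·A)^{α'}_α = ∑_{|β| = w} v^{α'}_β A^{α}_β`. -/
noncomputable def vecMul (w : ℕ) (v A : Mat n R) : Mat n R := fun α' α =>
  ∑ β ∈ degSet n w, v α' β * A α β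

end SymProd

namespace SymProd

variable {n : ℕ} {F : Type*} [Field F]

/-- The constant multi-index `(d,…,d)`. -/
noncomputable def constM (n d : ℕ) : MultiIndex n := Finsupp.equivFunOnFinite.symm fun _ => d

/-- Composition: substitution of the `n`-tuple `φ` (each with zero constant term) into the
multivariate power series `f`, i.e. `f(φ(x))`; the coefficient of `x^α` only receives
contributions from monomials `x^β` of `f` with `|β| ≤ |α|`. -/
noncomputable def mvComp (φ : Fin n → MvPowerSeries (Fin n) F)
    (f : MvPowerSeries (Fin n) F) : MvPowerSeries (Fin n) F := fun α =>
  ∑ β ∈ Finset.Iic (constM n (deg α)),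
    MvPowerSeries.coeff β f * MvPowerSeries.coeff α (∏ j : Fin n, φ j ^ β j)

/-- `m`-fold compositional iterate `φ^{∘m}` of a power series map, `φ^{∘0} = id`. -/
noncomputable def mvIter (φ : Fin n → MvPowerSeries (Fin n) F) :
    ℕ → Fin n → MvPowerSeries (Fin n) F
  | 0 => fun j => MvPowerSeries.X j
  | m + 1 => fun j => mvComp φ (mvIter φ m j)

/-- The matrix `M_φ ∈ Mat(F)` of a power series map `φ : Fⁿ → Fⁿ`: supported on the
column blocks `p = 1`, with `(M_φ)^{α'}_{e_j} = ` the coefficient of `x^{α'}` in `φ_j`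
(from the expansion `φ(x) = ∑_i (x^{⊙i}/i!) M^i_1`). -/
noncomputable def matOf (φ : Fin n → MvPowerSeries (Fin n) F) : Mat n F := fun α' α =>
  ∑ j : Fin n, if α = Finsupp.single j 1 then MvPowerSeries.coeff α' (φ j) else 0

/-- Ordinary (block) matrix product on `Mat(F)`; the contraction is truncated to
column-degrees `≤ deg α'`, which is the full product whenever the left factor `A`
satisfies `A α' β = 0` for `deg β > deg α'` (as is the case for `e^{⊙M_φ}` with
`φ(0) = 0`). -/
noncomputable def matMul (A B : Mat n F) : Mat n F := fun α' α =>
  ∑ β ∈ Finset.Iic (constM n (deg α')), A α' β * B β α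

/-- `E_1`: identity in the `(1,1)` block, zero elsewhere. -/
def E1 : Mat n F := fun α' α => if α' = α ∧ deg α = 1 then 1 else 0

/-- `E_∞`: the (infinite) identity matrix of `Mat(F)`. -/
def Einf : Mat n F := fun α' α => if α' = α then 1 else 0

/-- Powers with respect to ordinary matrix multiplication. -/
noncomputable def matPow (A : Mat n F) : ℕ → Mat n F
  | 0 => Einf
  | m + 1 => matMul A (matPow A m)

/-- `e^{⊙A} = ∑_i A^{⊙i}/i!`; the sum is truncated blockwise at `i = deg α'`, which is
the full sum whenever `A^{⊙i}` has vanishing `(deg α', ·)` blocks for `i > deg α'`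
(as is the case for `A = M_φ` with `M_φ(0,1) = 0`). -/
noncomputable def expOdot (A : Mat n F) : Mat n F := fun α' α =>
  ∑ i ∈ Finset.range (deg α' + 1), (i.factorial : F)⁻¹ * sympow A i α' α

end SymProd


namespace SymProd

open MvPowerSeries Finset

variable {n : ℕ}

lemma deg_eq_sum (α : MultiIndex n) : deg α = ∑ j, α j :=
  Finsupp.sum_fintype _ _ (fun _ => rfl)

lemma apply_le_deg (α : MultiIndex n) (j : Fin n) : α j ≤ deg α := by
  rw [deg_eq_sum]
  exact Finset.single_le_sum (fun _ _ => Nat.zero_le _) (Finset.mem_univ j)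

lemma deg_add (a b : MultiIndex n) : deg (a + b) = deg a + deg b := by
  simp [deg_eq_sum, Finset.sum_add_distrib]

lemma deg_eq_zero_iff (α : MultiIndex n) : deg α = 0 ↔ α = 0 := by
  rw [deg_eq_sum, Finset.sum_eq_zero_iff]
  constructor
  · intro h; ext j; exact h j (Finset.mem_univ j)
  · rintro rfl; simp

lemma constM_apply (k : ℕ) (j : Fin n) : constM n k j = k := rfl

lemma le_constM_of_deg_le {α : MultiIndex n} {k : ℕ} (h : deg α ≤ k) : α ≤ constM n k :=
  Finsupp.le_def.mpr fun j => le_trans (apply_le_deg α j) h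

lemma deg_lt_of_not_le_constM {γ : MultiIndex n} {k : ℕ} (h : ¬ γ ≤ constM n k) :
    k < deg γ := by
  by_contra h'
  exact h (le_constM_of_deg_le (not_lt.mp h'))

lemma mem_Iic_self_deg (α : MultiIndex n) : α ∈ Finset.Iic (constM n (deg α)) :=
  Finset.mem_Iic.mpr (le_constM_of_deg_le le_rfl)

lemma deg_single (j : Fin n) : deg (Finsupp.single j 1) = 1 := by
  simp [deg, Finsupp.sum_single_index]

lemma deg_sub_add {β α : MultiIndex n} (h : β ≤ α) : deg β + deg (α - β) = deg α := by
  rw [← deg_add, add_tsub_cancel_of_le h]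

variable {F : Type*} [Field F]

lemma coeff_mul_Iic (f g : MvPowerSeries (Fin n) F) (α : MultiIndex n) :
    MvPowerSeries.coeff α (f * g) =
      ∑ β ∈ Finset.Iic α,
        MvPowerSeries.coeff β f * MvPowerSeries.coeff (α - β) g := by
  rw [MvPowerSeries.coeff_mul]
  refine Finset.sum_nbij' (i := fun p => p.1) (j := fun β => (β, α - β)) ?_ ?_ ?_ ?_ ?_
  · intro p hp
    rw [Finset.HasAntidiagonal.mem_antidiagonal] at hp
    exact Finset.mem_Iic.mpr (hp ▸ le_self_add)
  · intro β hb
    rw [Finset.HasAntidiagonal.mem_antidiagonal]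
    exact add_tsub_cancel_of_le (Finset.mem_Iic.mp hb)
  · intro p hp
    rw [Finset.HasAntidiagonal.mem_antidiagonal] at hp
    exact Prod.ext rfl (eq_tsub_of_add_eq (by rw [add_comm]; exact hp)).symm
  · intro β _; rfl
  · intro p hp
    rw [Finset.HasAntidiagonal.mem_antidiagonal] at hp
    have h2 : p.2 = α - p.1 := eq_tsub_of_add_eq (by rw [add_comm]; exact hp)
    rw [h2]

/-- key support fact for columns: coeff of `φ^α` vanishes below degree `deg α`. -/
lemma matOf_zero_row (φ : Fin n → MvPowerSeries (Fin n) F)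
    (hφ : ∀ j, constantCoeff (φ j) = 0) (α : MultiIndex n) :
    matOf φ 0 α = 0 := by
  simp [matOf, MvPowerSeries.coeff_zero_eq_constantCoeff_apply, hφ]

lemma prod_pow_single (φ : Fin n → MvPowerSeries (Fin n) F) (j : Fin n) :
    (∏ k : Fin n, φ k ^ (Finsupp.single j 1) k) = φ j := by
  rw [Finset.prod_eq_single j]
  · simp
  · intro k _ hk
    rw [Finsupp.single_apply, if_neg fun h => hk h.symm, pow_zero]
  · intro h; exact absurd (Finset.mem_univ j) h

lemma prod_pow_add_single (φ : Fin n → MvPowerSeries (Fin n) F) {α β : MultiIndex n} {j : Fin n}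
    (h : α = β + Finsupp.single j 1) :
    (∏ k : Fin n, φ k ^ α k) = (∏ k : Fin n, φ k ^ β k) * φ j := by
  subst h
  simp only [Finsupp.add_apply, pow_add, Finset.prod_mul_distrib, prod_pow_single]

lemma mchoose_sub_single {α : MultiIndex n} {j : Fin n} (h : Finsupp.single j 1 ≤ α) :
    mchoose α (α - Finsupp.single j 1) = α j := by
  have hj : 1 ≤ α j := by
    have := Finsupp.le_def.mp h j
    simpa using this
  have hsub : (α - Finsupp.single j 1).support ⊆ α.support := by
    intro i hi
    rw [Finsupp.mem_support_iff] at hi ⊢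
    intro h0
    apply hi
    rw [Finsupp.tsub_apply, h0, Nat.zero_sub]
  unfold mchoose
  rw [Finset.union_eq_left.mpr hsub, Finset.prod_eq_single j]
  · rw [Finsupp.tsub_apply, Finsupp.single_apply, if_pos rfl]
    rw [show α j - 1 = α j - (α j - (α j - 1)) by omega]
    rw [Nat.choose_symm (by omega), show α j - (α j - 1) = 1 by omega, Nat.choose_one_right]
  · intro i _ hij
    rw [Finsupp.tsub_apply, Finsupp.single_apply, if_neg fun hh => hij hh.symm,
      Nat.sub_zero, Nat.choose_self]
  · intro hns
    exact absurd (Finsupp.mem_support_iff.mpr (by omega)) hns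

lemma sum_Iic_sub_single (α : MultiIndex n) (j : Fin n) (f : MultiIndex n → F) :
    (∑ β ∈ Finset.Iic α, if α - β = Finsupp.single j 1 then f β else 0) =
      if Finsupp.single j 1 ≤ α then f (α - Finsupp.single j 1) else 0 := by
  by_cases h : Finsupp.single j 1 ≤ α
  · rw [if_pos h, Finset.sum_eq_single (α - Finsupp.single j 1)]
    · rw [if_pos (tsub_tsub_cancel_of_le h)]
    · intro β hβ hne
      rw [if_neg]
      intro he
      apply hne
      have hb : β ≤ α := Finset.mem_Iic.mp hβ
      rw [← tsub_tsub_cancel_of_le hb, he]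
    · intro hmem
      exact absurd (Finset.mem_Iic.mpr tsub_le_self) hmem
  · rw [if_neg h]
    apply Finset.sum_eq_zero
    intro β hβ
    rw [if_neg]
    intro he
    exact h (he ▸ tsub_le_self)

/-- L1: `sympow (matOf φ) i` vanishes on rows of degree `< i`. -/
lemma sympow_matOf_zero (φ : Fin n → MvPowerSeries (Fin n) F)
    (hφ : ∀ j, constantCoeff (φ j) = 0) :
    ∀ i (α' α : MultiIndex n), deg α' < i → sympow (matOf φ) i α' α = 0 := by
  intro i
  induction i with
  | zero => intro α' α h; exact absurd h (Nat.not_lt_zero _)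
  | succ i ih =>
    intro α' α h
    show odot (sympow (matOf φ) i) (matOf φ) α' α = 0
    apply Finset.sum_eq_zero
    intro β' hβ'
    apply Finset.sum_eq_zero
    intro β hβ
    rcases eq_or_ne (sympow (matOf φ) i β' β) 0 with h0 | h0
    · rw [h0, mul_zero, zero_mul]
    · have hi : i ≤ deg β' := not_lt.mp fun hc => h0 (ih β' β hc)
      have hd : deg β' + deg (α' - β') = deg α' := deg_sub_add (Finset.mem_Iic.mp hβ')
      have hz : α' - β' = 0 := (deg_eq_zero_iff _).mp (by omega)
      rw [hz, matOf_zero_row φ hφ, mul_zero]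

/-- L2: the sympow formula. -/
lemma sympow_matOf (φ : Fin n → MvPowerSeries (Fin n) F)
    (i : ℕ) (α' α : MultiIndex n) :
    sympow (matOf φ) i α' α =
      if deg α = i then
        (i.factorial : F) * MvPowerSeries.coeff α' (∏ j : Fin n, φ j ^ α j)
      else 0 := by
  induction i generalizing α' α with
  | zero =>
    show matOne α' α = _
    unfold matOne
    by_cases h : α = 0
    · subst h
      rw [if_pos ((deg_eq_zero_iff (0 : MultiIndex n)).mpr rfl)]
      simp only [Finsupp.coe_zero, Pi.zero_apply, pow_zero, Finset.prod_const_one,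
        Nat.factorial_zero, Nat.cast_one, one_mul, MvPowerSeries.coeff_one]
      by_cases h' : α' = 0 <;> simp [h']
    · rw [if_neg (fun hc : α' = 0 ∧ α = 0 => h hc.2),
        if_neg (fun hc => h ((deg_eq_zero_iff α).mp hc))]
  | succ i ih =>
    show odot (sympow (matOf φ) i) (matOf φ) α' α = _
    unfold odot
    have e1 : ∀ β' ∈ Finset.Iic α', ∀ β ∈ Finset.Iic α,
        (mchoose α β : F) * sympow (matOf φ) i β' β * matOf φ (α' - β') (α - β)
        = ∑ j : Fin n, (if α - β = Finsupp.single j 1 then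
            (if deg β = i then ((mchoose α β : F) * (i.factorial : F)) *
              (MvPowerSeries.coeff β' (∏ k : Fin n, φ k ^ β k) *
               MvPowerSeries.coeff (α' - β') (φ j)) else 0) else 0) := by
      intro β' _ β _
      rw [ih, matOf, Finset.mul_sum]
      apply Finset.sum_congr rfl
      intro j _
      by_cases h1 : α - β = Finsupp.single j 1 <;> by_cases h2 : deg β = i <;>
        simp [h1, h2] <;> ring
    rw [Finset.sum_congr rfl fun β' hβ' =>
      Finset.sum_congr rfl fun β hβ => e1 β' hβ' β hβ]
    rw [Finset.sum_comm]
    -- now: ∑ β ∈ Iic α, ∑ β' ∈ Iic α', ∑ j, ...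
    have e2 : ∀ β ∈ Finset.Iic α,
        (∑ β' ∈ Finset.Iic α', ∑ j : Fin n, (if α - β = Finsupp.single j 1 then
            (if deg β = i then ((mchoose α β : F) * (i.factorial : F)) *
              (MvPowerSeries.coeff β' (∏ k : Fin n, φ k ^ β k) *
               MvPowerSeries.coeff (α' - β') (φ j)) else 0) else 0))
        = ∑ j : Fin n, (if α - β = Finsupp.single j 1 then
            (if deg β = i then ((mchoose α β : F) * (i.factorial : F)) *
              MvPowerSeries.coeff α' ((∏ k : Fin n, φ k ^ β k) * φ j) else 0) else 0) := by
      intro β _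
      rw [Finset.sum_comm]
      apply Finset.sum_congr rfl
      intro j _
      by_cases h1 : α - β = Finsupp.single j 1
      · by_cases h2 : deg β = i
        · simp only [h1, h2, if_true, if_pos]
          rw [← Finset.mul_sum, coeff_mul_Iic]
        · simp [h1, h2]
      · simp [h1]
    rw [Finset.sum_congr rfl e2, Finset.sum_comm]
    -- now: ∑ j, ∑ β ∈ Iic α, if α - β = e_j then f β else 0
    have e3 : ∀ j : Fin n,
        (∑ β ∈ Finset.Iic α, (if α - β = Finsupp.single j 1 then
            (if deg β = i then ((mchoose α β : F) * (i.factorial : F)) *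
              MvPowerSeries.coeff α' ((∏ k : Fin n, φ k ^ β k) * φ j) else 0) else 0))
        = if deg α = i + 1 then
            ((α j : F) * (i.factorial : F)) *
              MvPowerSeries.coeff α' (∏ k : Fin n, φ k ^ α k) else 0 := by
      intro j
      rw [sum_Iic_sub_single α j (fun β => if deg β = i then
            ((mchoose α β : F) * (i.factorial : F)) *
              MvPowerSeries.coeff α' ((∏ k : Fin n, φ k ^ β k) * φ j) else 0)]
      by_cases h : Finsupp.single j 1 ≤ α
      · rw [if_pos h]
        have hadd : α = (α - Finsupp.single j 1) + Finsupp.single j 1 :=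
          (tsub_add_cancel_of_le h).symm
        have hdeg : deg (α - Finsupp.single j 1) + 1 = deg α := by
          have := deg_sub_add h
          rw [deg_single] at this
          omega
        have hdiff : deg (α - Finsupp.single j 1) = i ↔ deg α = i + 1 := by omega
        by_cases h2 : deg α = i + 1
        · rw [if_pos (hdiff.mpr h2), if_pos h2, mchoose_sub_single h,
            ← prod_pow_add_single φ hadd]
        · rw [if_neg (fun hc => h2 (hdiff.mp hc)), if_neg h2]
      · rw [if_neg h]
        have hj : α j = 0 := by
          by_contra hc
          exact h (Finsupp.single_le_iff.mpr (by omega))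
        by_cases h2 : deg α = i + 1
        · rw [if_pos h2, hj]
          simp
        · rw [if_neg h2]
    rw [Finset.sum_congr rfl fun j _ => e3 j]
    by_cases h : deg α = i + 1
    · simp only [h, if_true, if_pos]
      rw [← Finset.sum_mul, ← Finset.sum_mul]
      have : (∑ j : Fin n, (α j : F)) = ((i + 1 : ℕ) : F) := by
        rw [← Nat.cast_sum, ← deg_eq_sum, h]
      rw [this, Nat.factorial_succ, Nat.cast_mul, mul_assoc]
    · simp [h]

/-- vanishing: coefficients of `φ^α` below degree `deg α` are zero. -/
lemma coeff_prod_pow_eq_zero [CharZero F] (φ : Fin n → MvPowerSeries (Fin n) F)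
    (hφ : ∀ j, constantCoeff (φ j) = 0) {α' α : MultiIndex n}
    (h : deg α' < deg α) :
    MvPowerSeries.coeff α' (∏ j : Fin n, φ j ^ α j) = 0 := by
  have h1 := sympow_matOf φ (deg α) α' α
  rw [if_pos rfl, sympow_matOf_zero φ hφ (deg α) α' α h] at h1
  have hf : ((deg α).factorial : F) ≠ 0 := Nat.cast_ne_zero.mpr (Nat.factorial_ne_zero _)
  exact (mul_eq_zero.mp h1.symm).resolve_left hf

/-- KEY: entries of `e^{⊙ M_φ}`. -/
lemma expOdot_matOf [CharZero F] (φ : Fin n → MvPowerSeries (Fin n) F)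
    (hφ : ∀ j, constantCoeff (φ j) = 0) (α' α : MultiIndex n) :
    expOdot (matOf φ) α' α = MvPowerSeries.coeff α' (∏ j : Fin n, φ j ^ α j) := by
  show (∑ i ∈ Finset.range (deg α' + 1), (i.factorial : F)⁻¹ * sympow (matOf φ) i α' α) = _
  by_cases h : deg α ≤ deg α'
  · rw [Finset.sum_eq_single (deg α)]
    · rw [sympow_matOf, if_pos rfl, ← mul_assoc,
        inv_mul_cancel₀ (Nat.cast_ne_zero.mpr (Nat.factorial_ne_zero _)), one_mul]
    · intro i _ hne
      rw [sympow_matOf, if_neg (fun hc => hne hc.symm), mul_zero]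
    · intro hmem
      exact absurd (Finset.mem_range.mpr (by omega)) hmem
  · rw [coeff_prod_pow_eq_zero φ hφ (not_le.mp h)]
    apply Finset.sum_eq_zero
    intro i hi
    rw [Finset.mem_range] at hi
    rw [sympow_matOf, if_neg (by omega), mul_zero]

lemma expOdot_matOf_zero_col [CharZero F] (φ : Fin n → MvPowerSeries (Fin n) F)
    (hφ : ∀ j, constantCoeff (φ j) = 0) {α' α : MultiIndex n}
    (h : deg α' < deg α) : expOdot (matOf φ) α' α = 0 := by
  rw [expOdot_matOf φ hφ]
  exact coeff_prod_pow_eq_zero φ hφ h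

/-- composition formula. -/
lemma matOf_comp [CharZero F] (φ ψ : Fin n → MvPowerSeries (Fin n) F)
    (hφ : ∀ j, constantCoeff (φ j) = 0) :
    matOf (fun j => mvComp φ (ψ j)) = matMul (expOdot (matOf φ)) (matOf ψ) := by
  funext α' α
  have key : ∀ j, (if α = Finsupp.single j 1
        then MvPowerSeries.coeff α' (mvComp φ (ψ j)) else 0)
      = ∑ β ∈ Finset.Iic (constM n (deg α')),
          MvPowerSeries.coeff α' (∏ k : Fin n, φ k ^ β k) *
            (if α = Finsupp.single j 1 then MvPowerSeries.coeff β (ψ j) else 0) := by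
    intro j
    by_cases h : α = Finsupp.single j 1
    · rw [if_pos h]
      rw [show MvPowerSeries.coeff α' (mvComp φ (ψ j)) = mvComp φ (ψ j) α' from rfl]
      unfold mvComp
      apply Finset.sum_congr rfl
      intro β _
      rw [if_pos h, mul_comm]
    · simp [h]
  show (∑ j : Fin n, if α = Finsupp.single j 1
      then MvPowerSeries.coeff α' (mvComp φ (ψ j)) else 0) = _
  rw [Finset.sum_congr rfl fun j _ => key j, Finset.sum_comm]
  apply Finset.sum_congr rfl
  intro β _
  show _ = expOdot (matOf φ) α' β * matOf ψ β α
  rw [expOdot_matOf φ hφ, matOf, Finset.mul_sum]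

/-- Degree-compatibility predicate: entries vanish when the column degree exceeds
the row degree. -/
def ColLE (A : Mat n F) : Prop := ∀ α' α : MultiIndex n, deg α' < deg α → A α' α = 0

lemma colLE_Einf : ColLE (Einf (n := n) (F := F)) := by
  intro α' α h
  simp only [Einf]
  rw [if_neg]
  rintro rfl; exact lt_irrefl _ h

lemma colLE_matMul {A B : Mat n F} (hA : ColLE A) (hB : ColLE B) : ColLE (matMul A B) := by
  intro α' α h
  apply Finset.sum_eq_zero
  intro β hβ
  rcases lt_or_ge (deg α') (deg β) with hb | hb
  · rw [hA _ _ hb, zero_mul]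
  · rw [hB _ _ (lt_of_le_of_lt hb h), mul_zero]

lemma matMul_assoc {A B C : Mat n F} (hA : ColLE A) (hB : ColLE B) :
    matMul (matMul A B) C = matMul A (matMul B C) := by
  have constM_mono : ∀ a b : ℕ, a ≤ b → constM n a ≤ constM n b :=
    fun a b h => Finsupp.le_def.mpr fun _ => h
  funext α' α
  show (∑ γ ∈ Finset.Iic (constM n (deg α')),
      (∑ β ∈ Finset.Iic (constM n (deg α')), A α' β * B β γ) * C γ α) =
    ∑ β ∈ Finset.Iic (constM n (deg α')),
      A α' β * ∑ γ ∈ Finset.Iic (constM n (deg β)), B β γ * C γ α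
  simp only [Finset.sum_mul, Finset.mul_sum]
  rw [Finset.sum_comm]
  apply Finset.sum_congr rfl
  intro β _
  rcases eq_or_ne (A α' β) 0 with h0 | h0
  · simp [h0]
  · have hdb : deg β ≤ deg α' := by
      by_contra hc
      exact h0 (hA _ _ (not_le.mp hc))
    rw [← Finset.sum_subset
        (Finset.Iic_subset_Iic.mpr (constM_mono _ _ hdb))
        (fun γ _ hns => ?_)]
    · exact Finset.sum_congr rfl fun γ _ => mul_assoc _ _ _
    · rw [hB _ _ (deg_lt_of_not_le_constM fun hle => hns (Finset.mem_Iic.mpr hle)),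
        mul_zero, zero_mul]

lemma colLE_expOdot_matOf [CharZero F] (φ : Fin n → MvPowerSeries (Fin n) F)
    (hφ : ∀ j, constantCoeff (φ j) = 0) : ColLE (expOdot (matOf φ)) :=
  fun _ _ h => expOdot_matOf_zero_col φ hφ h

lemma colLE_matPow_expOdot [CharZero F] (φ : Fin n → MvPowerSeries (Fin n) F)
    (hφ : ∀ j, constantCoeff (φ j) = 0) (m : ℕ) :
    ColLE (matPow (expOdot (matOf φ)) m) := by
  induction m with
  | zero => exact colLE_Einf
  | succ m ih => exact colLE_matMul (colLE_expOdot_matOf φ hφ) ih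

lemma matMul_Einf_E1 : matMul (Einf (n := n) (F := F)) E1 = E1 := by
  funext α' α
  show (∑ β ∈ Finset.Iic (constM n (deg α')), Einf α' β * E1 β α) = E1 α' α
  rw [Finset.sum_eq_single α']
  · show (if α' = α' then (1:F) else 0) * E1 α' α = E1 α' α
    rw [if_pos rfl, one_mul]
  · intro β _ hne
    show (if α' = β then (1:F) else 0) * E1 β α = 0
    rw [if_neg fun h => hne h.symm, zero_mul]
  · intro hmem
    exact absurd (mem_Iic_self_deg α') hmem

lemma matOf_X : matOf (fun j : Fin n => (MvPowerSeries.X j : MvPowerSeries (Fin n) F)) =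
    E1 := by
  have deg_one : ∀ α : MultiIndex n, deg α = 1 → ∃ j, α = Finsupp.single j 1 := by
    intro α h
    have hne : α ≠ 0 := by
      intro h0; rw [h0] at h; rw [(deg_eq_zero_iff (0 : MultiIndex n)).mpr rfl] at h; omega
    obtain ⟨j, hj⟩ : ∃ j, α j ≠ 0 := by
      by_contra hc
      push_neg at hc
      exact hne (Finsupp.ext fun j => hc j)
    have h1 : α j = 1 := le_antisymm (h ▸ apply_le_deg α j) (by omega)
    refine ⟨j, Finsupp.ext fun k => ?_⟩
    rw [Finsupp.single_apply]
    by_cases hk : j = k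
    · subst hk; rw [if_pos rfl]; exact h1
    · rw [if_neg hk]
      by_contra hk0
      have h2 : 1 ≤ α k := by omega
      have : α j + α k ≤ deg α := by
        rw [deg_eq_sum]
        have := Finset.sum_le_sum_of_subset
          (Finset.subset_univ {j, k}) (f := fun i => α i)
        rwa [Finset.sum_pair (fun hh => hk hh)] at this
      omega
  funext α' α
  show matOf _ α' α = E1 α' α
  unfold matOf E1
  by_cases h : ∃ j : Fin n, α = Finsupp.single j 1
  · obtain ⟨j, rfl⟩ := h
    rw [Finset.sum_eq_single j]
    · rw [if_pos rfl, MvPowerSeries.coeff_X]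
      by_cases h' : α' = Finsupp.single j 1
      · rw [if_pos h', if_pos ⟨h', deg_single j⟩]
      · rw [if_neg h', if_neg fun hc => h' hc.1]
    · intro k _ hkj
      rw [if_neg]
      intro he
      exact hkj (Finsupp.single_left_injective one_ne_zero he.symm)
    · intro hm; exact absurd (Finset.mem_univ j) hm
  · push_neg at h
    rw [Finset.sum_eq_zero fun j _ => if_neg (h j), if_neg]
    rintro ⟨rfl, hdeg⟩
    obtain ⟨j, hj⟩ := deg_one α' hdeg
    exact h j hj

end SymProd

open SymProd MvPowerSeries in
/-- for any natural `m` and a power series map `φ` with zero constant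
term, `M_{φ^{∘m}} = (e^{⊙M_φ})^m E_1`. -/
theorem matOf_iter {n : ℕ} (F : Type*) [Field F] [CharZero F]
    (φ : Fin n → MvPowerSeries (Fin n) F)
    (hφ : ∀ j, constantCoeff (φ j) = 0) (m : ℕ) :
    matOf (mvIter φ m) = matMul (matPow (expOdot (matOf φ)) m) E1 := by
  induction m with
  | zero =>
      show matOf (fun j => MvPowerSeries.X j) = matMul Einf E1
      rw [matMul_Einf_E1, matOf_X]
  | succ m ih =>
      show matOf (fun j => mvComp φ (mvIter φ m j)) = _
      rw [matOf_comp φ _ hφ, ih]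
      show _ = matMul (matMul (expOdot (matOf φ)) (matPow (expOdot (matOf φ)) m)) E1
      rw [matMul_assoc (colLE_expOdot_matOf φ hφ) (colLE_matPow_expOdot φ hφ m)]
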